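/- Let a, b, c, d, e ∈ ℂ be such that neither d nor e is a non-positive integer, ab + bc + ca = (d−1)(e−1), and d + e − a − b − c = 2. Then ₃F₂(a, b, c; d, e; 1) = Γ(d)·Γ(e) / (Γ(a+1)·Γ(b+1)·Γ(c+1)), where a quotient of Gamma values with a denominator argument equal to a non-positive integer is interpreted as zero. -/

import Mathlib

open Filter Finset Topology

noncomputable def poch (a : ℂ) (k : ℕ) : ℂ := Polynomial.eval a (ascPochhammer ℂ k)

noncomputable def F32 (a b c d e : ℂ) : ℂ :=
  ∑' k : ℕ, (poch a k * poch b k * poch c k) / (poch d k * poch e k * (k.factorial : ℂ))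

lemma poch_zero' (a : ℂ) : poch a 0 = 1 := by simp [poch]

lemma poch_succ (a : ℂ) (k : ℕ) : poch a (k+1) = poch a k * (a + k) := by
  simp [poch, ascPochhammer_succ_eval]

lemma poch_eq_prod (a : ℂ) (n : ℕ) : poch a n = ∏ j ∈ Finset.range n, (a + j) := by
  induction n with
  | zero => simp [poch]
  | succ n ih => rw [poch_succ, ih, Finset.prod_range_succ]

lemma poch_ne_zero {a : ℂ} (h : ∀ m : ℕ, a ≠ -(m:ℂ)) (n : ℕ) : poch a n ≠ 0 := by
  rw [poch_eq_prod]
  exact Finset.prod_ne_zero_iff.mpr fun j _ => by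
    intro hj; exact h j (by linear_combination hj)

lemma poch_eq_zero {a : ℂ} {m : ℕ} (ha : a = -(m:ℂ)) {n : ℕ} (hn : m < n) : poch a n = 0 := by
  rw [poch_eq_prod]
  exact Finset.prod_eq_zero (Finset.mem_range.mpr hn) (by rw [ha]; ring)

noncomputable def Tterm (a b c d e : ℂ) (k : ℕ) : ℂ :=
  poch a k * poch b k * poch c k / (poch d k * poch e k * (k.factorial : ℂ))

noncomputable def Vterm (a b c d e : ℂ) (k : ℕ) : ℂ :=
  (k : ℂ) * ((k : ℂ) + d - 1) * ((k : ℂ) + e - 1) * Tterm a b c d e k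

lemma F32_eq (a b c d e : ℂ) : F32 a b c d e = ∑' k, Tterm a b c d e k := rfl

lemma F32_swap12 (a b c d e : ℂ) : F32 a b c d e = F32 b a c d e :=
  tsum_congr fun k => by ring

lemma F32_swap13 (a b c d e : ℂ) : F32 a b c d e = F32 c b a d e :=
  tsum_congr fun k => by ring

section Tele

variable {a b c d e : ℂ}
  (hd : ∀ m : ℕ, d ≠ -(m : ℂ)) (he : ∀ m : ℕ, e ≠ -(m : ℂ))
  (hquad : a * b + b * c + c * a = (d - 1) * (e - 1))
  (hbal : d + e - a - b - c = 2)
include hd he hquad hbal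

lemma tele (k : ℕ) :
    Vterm a b c d e (k+1) - Vterm a b c d e k = a * b * c * Tterm a b c d e k := by
  have hdk : d + (k:ℂ) ≠ 0 := fun h => hd k (by linear_combination h)
  have hek : e + (k:ℂ) ≠ 0 := fun h => he k (by linear_combination h)
  have hk1 : ((k:ℂ) + 1) ≠ 0 := by
    have := Nat.cast_ne_zero (R := ℂ).mpr (Nat.succ_ne_zero k)
    push_cast at this; exact this
  have hpd : poch d k ≠ 0 := poch_ne_zero hd k
  have hpe : poch e k ≠ 0 := poch_ne_zero he k
  have hfk : (k.factorial : ℂ) ≠ 0 := Nat.cast_ne_zero.mpr k.factorial_ne_zero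
  have hV1 : Vterm a b c d e (k+1) = (a + k) * (b + k) * (c + k) * Tterm a b c d e k := by
    unfold Vterm Tterm
    rw [poch_succ, poch_succ, poch_succ, poch_succ, poch_succ, Nat.factorial_succ]
    push_cast
    field_simp
    ring
  rw [hV1]
  unfold Vterm
  linear_combination Tterm a b c d e k * ((k:ℂ) * hquad - (k:ℂ)^2 * hbal)

lemma psum (N : ℕ) :
    a * b * c * ∑ i ∈ Finset.range N, Tterm a b c d e i = Vterm a b c d e N := by
  induction N with
  | zero => simp [Vterm]
  | succ N ih =>
    rw [Finset.sum_range_succ, mul_add, ih, ← tele hd he hquad hbal N]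
    ring

end Tele

lemma GammaSeq_eq_poch (s : ℂ) (n : ℕ) :
    Complex.GammaSeq s n = (n:ℂ)^s * (n.factorial : ℂ) / poch s (n+1) := by
  rw [Complex.GammaSeq, poch_eq_prod]

noncomputable def Rseq (a b c d e : ℂ) (n : ℕ) : ℂ :=
  Complex.GammaSeq d n * Complex.GammaSeq e n /
    (Complex.GammaSeq a n * Complex.GammaSeq b n * Complex.GammaSeq c n)

lemma Tterm_eq_Rseq {a b c d e : ℂ}
    (ha : ∀ m : ℕ, a ≠ -(m : ℂ)) (hb : ∀ m : ℕ, b ≠ -(m : ℂ)) (hc : ∀ m : ℕ, c ≠ -(m : ℂ))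
    (hd : ∀ m : ℕ, d ≠ -(m : ℂ)) (he : ∀ m : ℕ, e ≠ -(m : ℂ))
    (hbal : d + e - a - b - c = 2) {n : ℕ} (hn : n ≠ 0) :
    Tterm a b c d e (n+1) = Rseq a b c d e n / ((n:ℂ)^2 * ((n:ℂ)+1)) := by
  have hn0 : (n:ℂ) ≠ 0 := Nat.cast_ne_zero.mpr hn
  have hn1 : ((n:ℂ)+1) ≠ 0 := by
    have := Nat.cast_ne_zero (R := ℂ).mpr (Nat.succ_ne_zero n); push_cast at this; exact this
  have hfn : ((n.factorial : ℕ):ℂ) ≠ 0 := Nat.cast_ne_zero.mpr n.factorial_ne_zero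
  have hpa := poch_ne_zero ha (n+1)
  have hpb := poch_ne_zero hb (n+1)
  have hpc := poch_ne_zero hc (n+1)
  have hpd := poch_ne_zero hd (n+1)
  have hpe := poch_ne_zero he (n+1)
  have hcpa : (n:ℂ)^a ≠ 0 := fun h => hn0 ((Complex.cpow_eq_zero_iff _ _).mp h).1
  have hcpb : (n:ℂ)^b ≠ 0 := fun h => hn0 ((Complex.cpow_eq_zero_iff _ _).mp h).1
  have hcpc : (n:ℂ)^c ≠ 0 := fun h => hn0 ((Complex.cpow_eq_zero_iff _ _).mp h).1
  have hcp : (n:ℂ)^d * (n:ℂ)^e = (n:ℂ)^a * (n:ℂ)^b * (n:ℂ)^c * (n:ℂ)^2 := by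
    rw [← Complex.cpow_add _ _ hn0, ← Complex.cpow_add _ _ hn0, ← Complex.cpow_add _ _ hn0,
      show ((n:ℂ)^2 = (n:ℂ)^((2:ℕ):ℂ)) by rw [Complex.cpow_natCast],
      ← Complex.cpow_add _ _ hn0]
    congr 1
    push_cast
    linear_combination hbal
  have hGa : Complex.GammaSeq a n ≠ 0 := by
    rw [GammaSeq_eq_poch]; exact div_ne_zero (mul_ne_zero hcpa hfn) hpa
  have hGb : Complex.GammaSeq b n ≠ 0 := by
    rw [GammaSeq_eq_poch]; exact div_ne_zero (mul_ne_zero hcpb hfn) hpb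
  have hGc : Complex.GammaSeq c n ≠ 0 := by
    rw [GammaSeq_eq_poch]; exact div_ne_zero (mul_ne_zero hcpc hfn) hpc
  have hnn : ((n:ℂ)^2 * ((n:ℂ)+1)) ≠ 0 := mul_ne_zero (pow_ne_zero 2 hn0) hn1
  rw [Rseq, div_div, eq_div_iff (mul_ne_zero (mul_ne_zero (mul_ne_zero hGa hGb) hGc) hnn)]
  unfold Tterm
  rw [GammaSeq_eq_poch, GammaSeq_eq_poch, GammaSeq_eq_poch, GammaSeq_eq_poch, GammaSeq_eq_poch,
    Nat.factorial_succ]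
  push_cast
  field_simp
  linear_combination -hcp

/-- The main case: none of `a`, `b`, `c` is a non-positive integer. -/
lemma slater_main
    (a b c d e : ℂ)
    (ha : ∀ m : ℕ, a ≠ -(m : ℂ)) (hb : ∀ m : ℕ, b ≠ -(m : ℂ)) (hc : ∀ m : ℕ, c ≠ -(m : ℂ))
    (hd : ∀ m : ℕ, d ≠ -(m : ℂ)) (he : ∀ m : ℕ, e ≠ -(m : ℂ))
    (hquad : a * b + b * c + c * a = (d - 1) * (e - 1))
    (hbal : d + e - a - b - c = 2) :
    F32 a b c d e
      = Complex.Gamma d * Complex.Gamma e /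
          (Complex.Gamma (a + 1) * Complex.Gamma (b + 1) * Complex.Gamma (c + 1)) := by
  have ha0 : a ≠ 0 := by simpa using ha 0
  have hb0 : b ≠ 0 := by simpa using hb 0
  have hc0 : c ≠ 0 := by simpa using hc 0
  set L0 : ℂ := Complex.Gamma d * Complex.Gamma e /
    (Complex.Gamma a * Complex.Gamma b * Complex.Gamma c) with hL0
  have hGprod : Complex.Gamma a * Complex.Gamma b * Complex.Gamma c ≠ 0 :=
    mul_ne_zero (mul_ne_zero (Complex.Gamma_ne_zero ha) (Complex.Gamma_ne_zero hb))
      (Complex.Gamma_ne_zero hc)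
  have hRlim : Tendsto (Rseq a b c d e) atTop (𝓝 L0) :=
    (((Complex.GammaSeq_tendsto_Gamma d).mul (Complex.GammaSeq_tendsto_Gamma e)).div
      (((Complex.GammaSeq_tendsto_Gamma a).mul (Complex.GammaSeq_tendsto_Gamma b)).mul
        (Complex.GammaSeq_tendsto_Gamma c)) hGprod)
  have hbddR : ∀ᶠ n in atTop, ‖Rseq a b c d e n‖ ≤ ‖L0‖ + 1 :=
    (hRlim.norm.eventually_lt_const (by linarith [norm_nonneg L0])).mono fun n h => le_of_lt h
  have hbound : ∀ᶠ n in atTop, ‖Tterm a b c d e (n+1)‖ ≤ (‖L0‖+1) * ((n:ℝ)^2)⁻¹ := by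
    filter_upwards [hbddR, eventually_ge_atTop 1] with n hR hn1
    have hn : n ≠ 0 := by omega
    rw [Tterm_eq_Rseq ha hb hc hd he hbal hn]
    have hnR : (0:ℝ) < (n:ℝ)^2 := by positivity
    have hnorm : ‖((n:ℂ)^2 * ((n:ℂ)+1))‖ = (n:ℝ)^2 * ((n:ℝ)+1) := by
      rw [norm_mul, norm_pow, Complex.norm_natCast]
      congr 1
      have : ((n:ℂ)+1) = (((n+1:ℕ)):ℂ) := by push_cast; ring
      rw [this, Complex.norm_natCast]; push_cast; ring
    rw [norm_div, hnorm]
    calc ‖Rseq a b c d e n‖ / ((n:ℝ)^2 * ((n:ℝ)+1)) ≤ (‖L0‖+1) / (n:ℝ)^2 := by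
          apply div_le_div₀ (by positivity) hR (by positivity)
          nlinarith [hnR]
    _ = (‖L0‖+1) * ((n:ℝ)^2)⁻¹ := by rw [div_eq_mul_inv]
  have hsummable1 : Summable (fun n => Tterm a b c d e (n+1)) := by
    apply Summable.of_norm_bounded_eventually_nat (g := fun n => (‖L0‖+1) * ((n:ℝ)^2)⁻¹)
    · exact (Real.summable_nat_pow_inv.mpr one_lt_two).mul_left _
    · exact hbound
  have hsummable : Summable (Tterm a b c d e) := (_root_.summable_nat_add_iff 1).mp hsummable1
  have hinv : Tendsto (fun n : ℕ => ((n:ℂ))⁻¹) atTop (𝓝 0) := by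
    rw [tendsto_zero_iff_norm_tendsto_zero]
    simp only [norm_inv, Complex.norm_natCast]
    exact tendsto_inv_atTop_zero.comp tendsto_natCast_atTop_atTop
  have hVlim : Tendsto (fun N => Vterm a b c d e N) atTop (𝓝 L0) := by
    rw [← Filter.tendsto_add_atTop_iff_nat 1]
    have heq : ∀ᶠ (n : ℕ) in atTop, (1 + d * ((n:ℂ))⁻¹) * (1 + e * ((n:ℂ))⁻¹) * Rseq a b c d e n
        = Vterm a b c d e (n+1) := by
      filter_upwards [eventually_ge_atTop 1] with n hn1
      have hn : n ≠ 0 := by omega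
      have hn0 : (n:ℂ) ≠ 0 := Nat.cast_ne_zero.mpr hn
      have hn1c : ((n:ℂ)+1) ≠ 0 := by
        have := Nat.cast_ne_zero (R := ℂ).mpr (Nat.succ_ne_zero n); push_cast at this; exact this
      rw [Vterm, Tterm_eq_Rseq ha hb hc hd he hbal hn]
      push_cast
      field_simp
      ring
    apply Tendsto.congr' heq
    have h1 : Tendsto (fun n : ℕ => (1 + d * ((n:ℂ))⁻¹)) atTop (𝓝 1) := by
      have := (tendsto_const_nhds (x := (1:ℂ)) (f := atTop (α := ℕ))).add (hinv.const_mul d)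
      simpa using this
    have h2 : Tendsto (fun n : ℕ => (1 + e * ((n:ℂ))⁻¹)) atTop (𝓝 1) := by
      have := (tendsto_const_nhds (x := (1:ℂ)) (f := atTop (α := ℕ))).add (hinv.const_mul e)
      simpa using this
    have := (h1.mul h2).mul hRlim
    simpa using this
  have hps : Tendsto (fun N => ∑ i ∈ Finset.range N, Tterm a b c d e i) atTop
      (𝓝 (∑' k, Tterm a b c d e k)) := hsummable.hasSum.tendsto_sum_nat
  have habc : Tendsto (fun N => a * b * c * ∑ i ∈ Finset.range N, Tterm a b c d e i) atTop
      (𝓝 (a * b * c * ∑' k, Tterm a b c d e k)) := hps.const_mul _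
  have heqV : (fun N => a * b * c * ∑ i ∈ Finset.range N, Tterm a b c d e i)
      = fun N => Vterm a b c d e N := funext fun N => psum hd he hquad hbal N
  rw [heqV] at habc
  have hkey : a * b * c * ∑' k, Tterm a b c d e k = L0 := tendsto_nhds_unique habc hVlim
  have habc0 : a * b * c ≠ 0 := mul_ne_zero (mul_ne_zero ha0 hb0) hc0
  have hsum_eq : ∑' k, Tterm a b c d e k = L0 / (a * b * c) :=
    eq_div_of_mul_eq habc0 (by linear_combination hkey)
  rw [F32_eq, hsum_eq, hL0, Complex.Gamma_add_one a ha0, Complex.Gamma_add_one b hb0,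
    Complex.Gamma_add_one c hc0, div_div]
  congr 1
  ring

lemma case_zero (a b c d e : ℂ)
    (hd : ∀ m : ℕ, d ≠ -(m : ℂ)) (he : ∀ m : ℕ, e ≠ -(m : ℂ))
    (hquad : a * b + b * c + c * a = (d - 1) * (e - 1))
    (hbal : d + e - a - b - c = 2) (ha : a = 0) :
    F32 a b c d e
      = Complex.Gamma d * Complex.Gamma e /
          (Complex.Gamma (a + 1) * Complex.Gamma (b + 1) * Complex.Gamma (c + 1)) := by
  subst ha
  have hL : F32 0 b c d e = 1 := by
    rw [F32_eq]
    rw [tsum_eq_single 0 (fun k hk => ?_)]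
    · simp [Tterm, poch_zero']
    · have : poch 0 k = 0 := poch_eq_zero (m := 0) (by norm_num) (Nat.pos_of_ne_zero hk)
      simp [Tterm, this]
  rw [hL]
  have hde : (d - (b+1)) * (d - (c+1)) = 0 := by
    linear_combination hquad + (d - 1) * hbal
  rcases mul_eq_zero.mp hde with h | h
  · have hdb : d = b + 1 := by linear_combination h
    have hec : e = c + 1 := by linear_combination hbal - h
    rw [← hdb, ← hec, zero_add, Complex.Gamma_one, one_mul]
    rw [eq_comm, div_self]
    exact mul_ne_zero (Complex.Gamma_ne_zero hd) (Complex.Gamma_ne_zero he)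
  · have hdc : d = c + 1 := by linear_combination h
    have heb : e = b + 1 := by linear_combination hbal - h
    rw [← hdc, ← heb, zero_add, Complex.Gamma_one, one_mul]
    rw [eq_comm, div_eq_one_iff_eq (mul_ne_zero (Complex.Gamma_ne_zero he)
      (Complex.Gamma_ne_zero hd))]
    ring

lemma case_negint (a b c d e : ℂ)
    (hd : ∀ m : ℕ, d ≠ -(m : ℂ)) (he : ∀ m : ℕ, e ≠ -(m : ℂ))
    (hquad : a * b + b * c + c * a = (d - 1) * (e - 1))
    (hbal : d + e - a - b - c = 2)
    (habc : a * b * c ≠ 0) (m : ℕ) (ham : a = -(((m+1:ℕ)):ℂ)) :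
    F32 a b c d e
      = Complex.Gamma d * Complex.Gamma e /
          (Complex.Gamma (a + 1) * Complex.Gamma (b + 1) * Complex.Gamma (c + 1)) := by
  have hT0 : ∀ k ∉ Finset.range (m+2), Tterm a b c d e k = 0 := by
    intro k hk
    rw [Finset.mem_range, not_lt] at hk
    have : poch a k = 0 := poch_eq_zero ham (by omega)
    simp [Tterm, this]
  have hL : F32 a b c d e = ∑ k ∈ Finset.range (m+2), Tterm a b c d e k := by
    rw [F32_eq]; exact tsum_eq_sum hT0
  have hV : Vterm a b c d e (m+2) = 0 := by
    have : poch a (m+2) = 0 := poch_eq_zero ham (by omega)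
    simp [Vterm, Tterm, this]
  have hsum0 : ∑ k ∈ Finset.range (m+2), Tterm a b c d e k = 0 := by
    have := psum hd he hquad hbal (m+2)
    rw [hV] at this
    exact (mul_eq_zero.mp this).resolve_left habc
  rw [hL, hsum0]
  have hGa : Complex.Gamma (a+1) = 0 := by
    have : a + 1 = -(m:ℂ) := by rw [ham]; push_cast; ring
    rw [this]
    exact Complex.Gamma_neg_nat_eq_zero m
  rw [hGa, zero_mul, zero_mul, div_zero]

/-- Theorem thm:newguys, part 1. -/
theorem slater_orbit_formula_one
    (a b c d e : ℂ)
    (hd : ∀ m : ℕ, d ≠ -(m : ℂ))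
    (he : ∀ m : ℕ, e ≠ -(m : ℂ))
    (hquad : a * b + b * c + c * a = (d - 1) * (e - 1))
    (hbal : d + e - a - b - c = 2) :
    F32 a b c d e
      = Complex.Gamma d * Complex.Gamma e /
          (Complex.Gamma (a + 1) * Complex.Gamma (b + 1) * Complex.Gamma (c + 1)) := by
  by_cases ha0 : a = 0
  · exact case_zero a b c d e hd he hquad hbal ha0
  by_cases hb0 : b = 0
  · rw [F32_swap12, case_zero b a c d e hd he (by linear_combination hquad)
      (by linear_combination hbal) hb0]
    ring
  by_cases hc0 : c = 0
  · rw [F32_swap13, case_zero c b a d e hd he (by linear_combination hquad)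
      (by linear_combination hbal) hc0]
    ring
  have habc0 : a * b * c ≠ 0 := mul_ne_zero (mul_ne_zero ha0 hb0) hc0
  by_cases hA : ∀ m : ℕ, a ≠ -(m : ℂ)
  · by_cases hB : ∀ m : ℕ, b ≠ -(m : ℂ)
    · by_cases hC : ∀ m : ℕ, c ≠ -(m : ℂ)
      · exact slater_main a b c d e hA hB hC hd he hquad hbal
      · push_neg at hC
        obtain ⟨m, hm⟩ := hC
        rcases m with _ | m
        · exact absurd (by simpa using hm) hc0
        · rw [F32_swap13, case_negint c b a d e hd he (by linear_combination hquad)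
            (by linear_combination hbal) (by intro h; exact habc0 (by linear_combination h)) m
            (by exact_mod_cast hm)]
          ring
    · push_neg at hB
      obtain ⟨m, hm⟩ := hB
      rcases m with _ | m
      · exact absurd (by simpa using hm) hb0
      · rw [F32_swap12, case_negint b a c d e hd he (by linear_combination hquad)
          (by linear_combination hbal) (by intro h; exact habc0 (by linear_combination h)) m
          (by exact_mod_cast hm)]
        ring
  · push_neg at hA
    obtain ⟨m, hm⟩ := hA
    rcases m with _ | m
    · exact absurd (by simpa using hm) ha0
    · exact case_negint a b c d e hd he hquad hbal habc0 m (by exact_mod_cast hm)
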